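/- Let A be a unital C*-algebra, τ : A → ℂ a continuous linear tracial functional (τ(xy) = τ(yx)), and ∂ : A → A a continuous ℂ-linear τ-invariant derivation (τ(∂(x)) = 0). Let f ∈ A be self-adjoint and suppose f commutes with its derivative: f·∂(f) = ∂(f)·f. Then τ( e^{f/2} · ( ∂(∂(f)) + ½·(∂f)·(∂f) ) ) = 0. Consequently the Gauss–Bonnet theorem τ(R·√det g) = τ(R·e^{f/2}) = 0 holds for the metric diag(e^f, 1) on the noncommutative two-torus with scalar curvature R = −∂₂²f − ½(∂₂f)². -/

import Mathlib

open NormedSpace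

lemma aux_D_pow {A : Type*} [NormedRing A] [NormedAlgebra ℂ A]
    (D : A →L[ℂ] A) (hD : ∀ x y : A, D (x * y) = D x * y + x * D y)
    (x : A) (hx : x * D x = D x * x) :
    ∀ n : ℕ, D (x ^ (n + 1)) = (n + 1 : ℂ) • (x ^ n * D x) := by
  intro n
  induction n with
  | zero => simp
  | succ n ih =>
    rw [pow_succ x (n + 1), hD, ih]
    have h1 : (x ^ n * D x) * x = x ^ (n + 1) * D x := by
      rw [mul_assoc, ← hx, ← mul_assoc, ← pow_succ]
    rw [smul_mul_assoc, h1]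
    have h2 : ((n : ℂ) + 1 + 1 : ℂ) • (x ^ (n + 1) * D x)
        = ((n : ℂ) + 1) • (x ^ (n + 1) * D x) + x ^ (n + 1) * D x := by
      rw [add_smul, one_smul]
    push_cast
    rw [h2]

lemma aux_D_one {A : Type*} [NormedRing A] [NormedAlgebra ℂ A]
    (D : A →L[ℂ] A) (hD : ∀ x y : A, D (x * y) = D x * y + x * D y) :
    D 1 = 0 := by
  have h := hD 1 1
  simp only [one_mul, mul_one] at h
  exact (left_eq_add.mp h)

lemma aux_D_exp {A : Type*} [NormedRing A] [NormedAlgebra ℂ A] [CompleteSpace A]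
    (D : A →L[ℂ] A) (hD : ∀ x y : A, D (x * y) = D x * y + x * D y)
    (x : A) (hx : x * D x = D x * x) :
    D (exp x) = exp x * D x := by
  have hsum : Summable fun n : ℕ => ((Nat.factorial n : ℂ))⁻¹ • x ^ n := expSeries_summable' x
  have hsum2 : Summable fun n : ℕ => D (((Nat.factorial n : ℂ))⁻¹ • x ^ n) :=
    hsum.map D D.continuous
  have h0 : D (((Nat.factorial 0 : ℂ))⁻¹ • x ^ 0) = 0 := by
    simp [aux_D_one D hD]
  have hterm : ∀ n : ℕ, D (((Nat.factorial (n + 1) : ℂ))⁻¹ • x ^ (n + 1))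
      = (((Nat.factorial n : ℂ))⁻¹ • x ^ n) * D x := by
    intro n
    rw [map_smul, aux_D_pow D hD x hx n, smul_smul, smul_mul_assoc]
    congr 1
    rw [Nat.factorial_succ]
    push_cast
    rw [mul_inv, mul_comm ((n : ℂ) + 1)⁻¹, mul_assoc,
      inv_mul_cancel₀ (Nat.cast_add_one_ne_zero n), mul_one]
  rw [exp_eq_tsum ℂ, D.map_tsum hsum, Summable.tsum_eq_zero_add hsum2, h0, zero_add,
    tsum_congr hterm, hsum.tsum_mul_right]

/-- **Gauss–Bonnet for the metric `diag(e^f, 1)` when `f` commutes with its derivative.**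
For a unital C*-algebra with continuous tracial linear functional `τ` and a continuous
`τ`-invariant derivation `∂`, if the self-adjoint element `f` commutes with `∂f`, then
`τ(e^{f/2}·(∂²f + ½(∂f)²)) = 0`, i.e. the Gauss–Bonnet theorem
`τ(R·√det g) = τ(R·e^{f/2}) = 0` holds for the scalar curvature `R = −∂²f − ½(∂f)²`. -/
theorem stmt_12 {A : Type*} [NormedRing A] [StarRing A] [CStarRing A]
    [NormedAlgebra ℂ A] [CompleteSpace A] [StarModule ℂ A]
    (τ : A →L[ℂ] ℂ) (hτ : ∀ x y : A, τ (x * y) = τ (y * x))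
    (D : A →L[ℂ] A) (hD : ∀ x y : A, D (x * y) = D x * y + x * D y)
    (hτD : ∀ x : A, τ (D x) = 0)
    (f : A) (hf : IsSelfAdjoint f) (hcomm : f * D f = D f * f) :
    τ (exp ((1/2 : ℂ) • f) * (D (D f) + (1/2 : ℂ) • (D f * D f))) = 0 := by
  set g := (1/2 : ℂ) • f with hg
  have hDg : D g = (1/2 : ℂ) • D f := by rw [hg, map_smul]
  have hc : g * D g = D g * g := by
    rw [hg, hDg, smul_mul_assoc, smul_mul_assoc, mul_smul_comm, mul_smul_comm, hcomm]
  have hDexp : D (exp g) = exp g * D g := aux_D_exp D hD g hc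
  have key : D (exp g * D f) =
      exp g * (D (D f) + (1/2 : ℂ) • (D f * D f)) := by
    rw [hD, hDexp, hDg]
    simp only [mul_add, mul_smul_comm, smul_mul_assoc, mul_assoc]
    abel
  rw [← key]
  exact hτD _
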